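/- Let 0 < q < 1, let ν be a positive integer, let z ∈ ℂ, and let H : ℂ → ℂ be a function that is continuous at 0 and satisfies H(0) = −((1−q)^ν/log q)·(ν−1)! and H(q·t) = e^{−t}·( H(t) + t^ν·q^{ν(1−z)}·e^{t·[1−z]_q} ) for all t ∈ ℂ. Then H(t) = −((1−q)^ν/log q)·(ν−1)!·e^{t/(1−q)} − F_q^{−,ν}(t,z) for every t ∈ ℂ. -/

import Mathlib

open Complex

/-- `q^w := exp(w · log q)` with the real logarithm of `q`. -/
noncomputable def qpow (q : ℝ) (w : ℂ) : ℂ := Complex.exp (w * Real.log q)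

/-- `[w]_q := (1 - q^w)/(1 - q)`. -/
noncomputable def qbr (q : ℝ) (w : ℂ) : ℂ := (1 - qpow q w) / (1 - (q : ℂ))

/-- the term of index `n+1` of the series defining `F_q^{-,ν}(t,z)`. -/
noncomputable def FmTerm (q : ℝ) (ν : ℕ) (t z : ℂ) (n : ℕ) : ℂ :=
  qpow q ((ν : ℂ) * (((n : ℂ) + 1) - z)) * Complex.exp (t * qbr q (((n : ℂ) + 1) - z))

/-- `F_q^{-,ν}(t,z)`. -/
noncomputable def Fm (q : ℝ) (ν : ℕ) (t z : ℂ) : ℂ := t ^ ν * ∑' n : ℕ, FmTerm q ν t z n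

lemma qpow_add (q : ℝ) (a b : ℂ) : qpow q (a + b) = qpow q a * qpow q b := by
  simp [qpow, add_mul, Complex.exp_add]
lemma qpow_one (q : ℝ) (hq0 : 0 < q) : qpow q 1 = (q : ℂ) := by
  rw [qpow, one_mul, ← Complex.ofReal_exp, Real.exp_log hq0]
lemma qpow_nat (q : ℝ) (hq0 : 0 < q) (n : ℕ) : qpow q (n : ℂ) = (q : ℂ) ^ n := by
  rw [qpow, Complex.exp_nat_mul, ← Complex.ofReal_exp, Real.exp_log hq0]
lemma norm_qpow (q : ℝ) (w : ℂ) : ‖qpow q w‖ = Real.exp (w.re * Real.log q) := by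
  rw [qpow, Complex.norm_exp]
  congr 1
  simp [Complex.mul_re]
lemma qbr_succ (q : ℝ) (hq0 : 0 < q) (hq1 : q < 1) (w : ℂ) :
    qbr q (w + 1) = (q : ℂ) * qbr q w + 1 := by
  have hne : (1 : ℂ) - (q : ℂ) ≠ 0 := sub_ne_zero.mpr (by exact_mod_cast hq1.ne')
  rw [qbr, qbr, qpow_add, qpow_one q hq0]
  field_simp
  ring

lemma FmTerm_shift (q : ℝ) (hq0 : 0 < q) (hq1 : q < 1) (ν : ℕ) (z t : ℂ) (n : ℕ) :
    ((q : ℂ) * t) ^ ν * FmTerm q ν ((q : ℂ) * t) z n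
      = Complex.exp (-t) * (t ^ ν * FmTerm q ν t z (n + 1)) := by
  have h1 : ((n + 1 : ℕ) : ℂ) + 1 - z = ((n : ℂ) + 1 - z) + 1 := by push_cast; ring
  have h2 : (ν : ℂ) * (((n : ℂ) + 1 - z) + 1) = (ν : ℂ) * ((n : ℂ) + 1 - z) + (ν : ℂ) := by ring
  rw [FmTerm, FmTerm, h1, h2, qpow_add, qpow_nat q hq0, qbr_succ q hq0 hq1,
    mul_pow]
  rw [show t * ((q : ℂ) * qbr q ((n : ℂ) + 1 - z) + 1) = (q : ℂ) * t * qbr q ((n : ℂ) + 1 - z) + t by ring,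
    Complex.exp_add]
  rw [show (Complex.exp (-t) : ℂ) = (Complex.exp t)⁻¹ from Complex.exp_neg t]
  have hexp : Complex.exp t ≠ 0 := Complex.exp_ne_zero t
  field_simp

lemma norm_qbr_le (q : ℝ) (hq0 : 0 < q) (hq1 : q < 1) (z : ℂ) (n : ℕ) :
    ‖qbr q (((n : ℂ) + 1) - z)‖ ≤ (1 + Real.exp ((1 - z.re) * Real.log q)) / (1 - q) := by
  have hlogq : Real.log q < 0 := Real.log_neg hq0 hq1
  have h1q : (0:ℝ) < 1 - q := by linarith
  rw [qbr, norm_div]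
  have hden : ‖(1 : ℂ) - (q : ℂ)‖ = 1 - q := by
    rw [show (1 : ℂ) - (q : ℂ) = ((1 - q : ℝ) : ℂ) by push_cast; ring,
      Complex.norm_real, Real.norm_of_nonneg h1q.le]
  rw [hden, div_le_div_iff_of_pos_right h1q]  -- maybe wrong name
  calc ‖(1 : ℂ) - qpow q (((n : ℂ) + 1) - z)‖ ≤ ‖(1:ℂ)‖ + ‖qpow q (((n : ℂ) + 1) - z)‖ := norm_sub_le _ _
    _ ≤ 1 + Real.exp ((1 - z.re) * Real.log q) := by
        rw [norm_one, norm_qpow]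
        have : ((((n : ℂ) + 1) - z)).re = (n : ℝ) + 1 - z.re := by simp
        rw [this]
        have : (1 - z.re) * Real.log q ≥ ((n:ℝ) + 1 - z.re) * Real.log q := by
          apply mul_le_mul_of_nonpos_right _ hlogq.le
          have : (0:ℝ) ≤ n := Nat.cast_nonneg n
          linarith
        linarith [Real.exp_le_exp.mpr this]

lemma FmTerm_norm_le (q : ℝ) (hq0 : 0 < q) (hq1 : q < 1) (ν : ℕ) (z t : ℂ) (R : ℝ)
    (hR : ‖t‖ ≤ R) (n : ℕ) :
    ‖FmTerm q ν t z n‖ ≤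
      Real.exp (-((ν : ℝ) * z.re) * Real.log q) *
        Real.exp (R * ((1 + Real.exp ((1 - z.re) * Real.log q)) / (1 - q))) * (q ^ ν) ^ (n + 1) := by
  have hlogq : Real.log q < 0 := Real.log_neg hq0 hq1
  have h1q : (0:ℝ) < 1 - q := by linarith
  have hRnn : (0:ℝ) ≤ R := le_trans (norm_nonneg t) hR
  set C : ℝ := (1 + Real.exp ((1 - z.re) * Real.log q)) / (1 - q) with hC
  have hCnn : 0 ≤ C := by positivity
  rw [FmTerm, norm_mul, norm_qpow]
  have hre : ((ν : ℂ) * (((n : ℂ) + 1) - z)).re = (ν : ℝ) * ((n : ℝ) + 1 - z.re) := by simp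
  rw [hre]
  have hq1' : ‖Complex.exp (t * qbr q (((n : ℂ) + 1) - z))‖ ≤ Real.exp (R * C) := by
    rw [Complex.norm_exp]
    apply Real.exp_le_exp.mpr
    calc (t * qbr q (((n : ℂ) + 1) - z)).re ≤ ‖t * qbr q (((n : ℂ) + 1) - z)‖ :=
          Complex.re_le_norm _
      _ = ‖t‖ * ‖qbr q (((n : ℂ) + 1) - z)‖ := norm_mul _ _
      _ ≤ R * C := mul_le_mul hR (norm_qbr_le q hq0 hq1 z n) (norm_nonneg _) hRnn
  have hfac : Real.exp ((ν : ℝ) * ((n : ℝ) + 1 - z.re) * Real.log q)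
      = Real.exp (-((ν : ℝ) * z.re) * Real.log q) * (q ^ ν) ^ (n + 1) := by
    have : (ν : ℝ) * ((n : ℝ) + 1 - z.re) * Real.log q
        = (-((ν : ℝ) * z.re) * Real.log q) + ((ν * (n + 1) : ℕ) : ℝ) * Real.log q := by
      push_cast; ring
    rw [this, Real.exp_add, Real.exp_nat_mul, Real.exp_log hq0, ← pow_mul]
  rw [hfac]
  calc Real.exp (-((ν : ℝ) * z.re) * Real.log q) * (q ^ ν) ^ (n + 1) *
        ‖Complex.exp (t * qbr q (((n : ℂ) + 1) - z))‖
      ≤ Real.exp (-((ν : ℝ) * z.re) * Real.log q) * (q ^ ν) ^ (n + 1) * Real.exp (R * C) := by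
        apply mul_le_mul_of_nonneg_left hq1'
        positivity
    _ = Real.exp (-((ν : ℝ) * z.re) * Real.log q) * Real.exp (R * C) * (q ^ ν) ^ (n + 1) := by ring

lemma FmTerm_summable (q : ℝ) (hq0 : 0 < q) (hq1 : q < 1) (ν : ℕ) (hν : 0 < ν) (z t : ℂ) :
    Summable (FmTerm q ν t z) := by
  apply Summable.of_norm
  apply Summable.of_nonneg_of_le (fun n => norm_nonneg _)
    (FmTerm_norm_le q hq0 hq1 ν z t ‖t‖ le_rfl)
  have hr : q ^ ν < 1 := pow_lt_one₀ hq0.le hq1 hν.ne'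
  have hr0 : (0:ℝ) ≤ q ^ ν := by positivity
  apply Summable.mul_left
  exact ((summable_geometric_of_lt_one hr0 hr).mul_left (q ^ ν)).congr
    (fun n => by rw [pow_succ]; ring)

lemma bound_summable (q : ℝ) (hq0 : 0 < q) (hq1 : q < 1) (ν : ℕ) (hν : 0 < ν) (A : ℝ) :
    Summable (fun n : ℕ => A * (q ^ ν) ^ (n + 1)) := by
  have hr : q ^ ν < 1 := pow_lt_one₀ hq0.le hq1 hν.ne'
  have hr0 : (0:ℝ) ≤ q ^ ν := by positivity
  apply Summable.mul_left
  exact ((summable_geometric_of_lt_one hr0 hr).mul_left (q ^ ν)).congr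
    (fun n => by rw [pow_succ]; ring)

lemma Fm_fe (q : ℝ) (hq0 : 0 < q) (hq1 : q < 1) (ν : ℕ) (hν : 0 < ν) (z t : ℂ) :
    Fm q ν ((q : ℂ) * t) z
      = Complex.exp (-t) * (Fm q ν t z - t ^ ν * FmTerm q ν t z 0) := by
  have hsum := FmTerm_summable q hq0 hq1 ν hν z t
  rw [Fm, ← tsum_mul_left]
  rw [tsum_congr (fun n => FmTerm_shift q hq0 hq1 ν z t n)]
  rw [tsum_mul_left, tsum_mul_left]
  have hshift : ∑' n : ℕ, FmTerm q ν t z (n + 1)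
      = (∑' n : ℕ, FmTerm q ν t z n) - FmTerm q ν t z 0 := by
    rw [Summable.tsum_eq_zero_add hsum]; ring
  rw [hshift, Fm]; ring

lemma Fm_norm_le (q : ℝ) (hq0 : 0 < q) (hq1 : q < 1) (ν : ℕ) (hν : 0 < ν) (z s t : ℂ)
    (hst : ‖s‖ ≤ ‖t‖) :
    ‖Fm q ν s z‖ ≤ ‖s‖ ^ ν *
      ∑' n : ℕ, (Real.exp (-((ν : ℝ) * z.re) * Real.log q) *
        Real.exp (‖t‖ * ((1 + Real.exp ((1 - z.re) * Real.log q)) / (1 - q))) * (q ^ ν) ^ (n + 1)) := by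
  rw [Fm, norm_mul, norm_pow]
  apply mul_le_mul_of_nonneg_left _ (by positivity)
  exact tsum_of_norm_bounded (bound_summable q hq0 hq1 ν hν _).hasSum
    (FmTerm_norm_le q hq0 hq1 ν z s ‖t‖ hst)

theorem stmt11 (q : ℝ) (hq0 : 0 < q) (hq1 : q < 1) (ν : ℕ) (hν : 0 < ν) (z : ℂ)
    (H : ℂ → ℂ) (Hcont : ContinuousAt H 0)
    (H0 : H 0 = -((((1 - q) ^ ν : ℝ) : ℂ) / (Real.log q : ℂ)) * (Nat.factorial (ν - 1) : ℂ))
    (Hfe : ∀ t : ℂ, H ((q : ℂ) * t) =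
      Complex.exp (-t) *
        (H t + t ^ ν * qpow q ((ν : ℂ) * (1 - z)) * Complex.exp (t * qbr q (1 - z)))) :
    ∀ t : ℂ, H t =
      -((((1 - q) ^ ν : ℝ) : ℂ) / (Real.log q : ℂ)) * (Nat.factorial (ν - 1) : ℂ) *
        Complex.exp (t / (1 - (q : ℂ))) - Fm q ν t z := by
  intro t
  have hq1c : (q : ℂ) ≠ 1 := by exact_mod_cast hq1.ne
  have hne : (1 : ℂ) - (q : ℂ) ≠ 0 := sub_ne_zero.mpr (Ne.symm hq1c)
  set c : ℂ := -((((1 - q) ^ ν : ℝ) : ℂ) / (Real.log q : ℂ)) * (Nat.factorial (ν - 1) : ℂ)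
    with hc
  set D : ℂ → ℂ := fun s => H s - (c * Complex.exp (s / (1 - (q : ℂ))) - Fm q ν s z) with hD
  suffices h : D t = 0 by
    have h2 : H t = c * Complex.exp (t / (1 - (q : ℂ))) - Fm q ν t z := by
      have := sub_eq_zero.mp h
      simpa [hD] using this
    rw [h2]
  -- functional equation for D
  have hDfe : ∀ s : ℂ, D ((q : ℂ) * s) = Complex.exp (-s) * D s := by
    intro s
    have h1 := Hfe s
    have h2 := Fm_fe q hq0 hq1 ν hν z s
    have h3 : Complex.exp ((q : ℂ) * s / (1 - (q : ℂ)))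
        = Complex.exp (-s) * Complex.exp (s / (1 - (q : ℂ))) := by
      rw [← Complex.exp_add]
      congr 1
      field_simp
      ring
    have h4 : FmTerm q ν s z 0
        = qpow q ((ν : ℂ) * (1 - z)) * Complex.exp (s * qbr q (1 - z)) := by
      simp [FmTerm]
    simp only [hD]
    rw [h1, h2, h3, h4]
    ring
  -- iteration
  have hiter : ∀ n : ℕ, D t
      = Complex.exp (t * (1 - (q : ℂ) ^ n) / (1 - (q : ℂ))) * D ((q : ℂ) ^ n * t) := by
    intro n
    induction n with
    | zero => simp
    | succ n ih =>
      have hstep := hDfe ((q : ℂ) ^ n * t)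
      have hpow : (q : ℂ) ^ (n + 1) * t = (q : ℂ) * ((q : ℂ) ^ n * t) := by
        rw [pow_succ]; ring
      have hexp : Complex.exp (t * (1 - (q : ℂ) ^ n) / (1 - (q : ℂ)))
          = Complex.exp (t * (1 - (q : ℂ) ^ (n + 1)) / (1 - (q : ℂ)))
            * Complex.exp (-((q : ℂ) ^ n * t)) := by
        rw [← Complex.exp_add]
        congr 1
        field_simp
        ring
      rw [hpow, hstep, ih, hexp]
      ring
  -- limits
  have hq_lt : ‖(q : ℂ)‖ < 1 := by
    rw [Complex.norm_real, Real.norm_eq_abs, abs_of_pos hq0]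
    exact hq1
  have hqn : Filter.Tendsto (fun n : ℕ => (q : ℂ) ^ n) Filter.atTop (nhds 0) :=
    tendsto_pow_atTop_nhds_zero_of_norm_lt_one hq_lt
  have htend0 : Filter.Tendsto (fun n : ℕ => (q : ℂ) ^ n * t) Filter.atTop (nhds 0) := by
    simpa using hqn.mul_const t
  have hH : Filter.Tendsto (fun n : ℕ => H ((q : ℂ) ^ n * t)) Filter.atTop (nhds (H 0)) :=
    Hcont.tendsto.comp htend0
  have hexp1 : Filter.Tendsto (fun n : ℕ => Complex.exp ((q : ℂ) ^ n * t / (1 - (q : ℂ))))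
      Filter.atTop (nhds 1) := by
    have hcont : Continuous (fun s : ℂ => Complex.exp (s / (1 - (q : ℂ)))) :=
      Complex.continuous_exp.comp (continuous_id.div_const _)
    have := (hcont.tendsto 0).comp htend0
    simpa [Function.comp_def] using this
  have hFm : Filter.Tendsto (fun n : ℕ => Fm q ν ((q : ℂ) ^ n * t) z) Filter.atTop (nhds 0) := by
    set K : ℝ := ∑' n : ℕ, (Real.exp (-((ν : ℝ) * z.re) * Real.log q) *
      Real.exp (‖t‖ * ((1 + Real.exp ((1 - z.re) * Real.log q)) / (1 - q))) * (q ^ ν) ^ (n + 1))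
      with hK
    have hKnn : 0 ≤ K := tsum_nonneg (fun n => by positivity)
    apply squeeze_zero_norm (a := fun n : ℕ => (q ^ ν) ^ n * (‖t‖ ^ ν * K))
    · intro n
      have hnorm : ‖(q : ℂ) ^ n * t‖ = q ^ n * ‖t‖ := by
        rw [norm_mul, norm_pow, Complex.norm_real, Real.norm_eq_abs, abs_of_pos hq0]
      have hle : ‖(q : ℂ) ^ n * t‖ ≤ ‖t‖ := by
        rw [hnorm]
        calc q ^ n * ‖t‖ ≤ 1 * ‖t‖ := by
              apply mul_le_mul_of_nonneg_right _ (norm_nonneg t)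
              exact pow_le_one₀ hq0.le hq1.le
          _ = ‖t‖ := one_mul _
      calc ‖Fm q ν ((q : ℂ) ^ n * t) z‖ ≤ ‖(q : ℂ) ^ n * t‖ ^ ν * K :=
            Fm_norm_le q hq0 hq1 ν hν z _ t hle
        _ = (q ^ ν) ^ n * (‖t‖ ^ ν * K) := by
            rw [hnorm, mul_pow, ← pow_mul, ← pow_mul, Nat.mul_comm]
            ring
    · have hr : q ^ ν < 1 := pow_lt_one₀ hq0.le hq1 hν.ne'
      have hr0 : (0:ℝ) ≤ q ^ ν := by positivity
      have := (tendsto_pow_atTop_nhds_zero_of_lt_one hr0 hr).mul_const (‖t‖ ^ ν * K)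
      simpa using this
  have hDlim : Filter.Tendsto (fun n : ℕ => D ((q : ℂ) ^ n * t)) Filter.atTop (nhds 0) := by
    have := hH.sub ((Filter.Tendsto.mul tendsto_const_nhds hexp1 :
        Filter.Tendsto (fun n : ℕ => c * Complex.exp ((q : ℂ) ^ n * t / (1 - (q : ℂ))))
          Filter.atTop (nhds (c * 1))).sub hFm)
    simpa [hD, H0, mul_one] using this
  have hcontexp : Filter.Tendsto
      (fun n : ℕ => Complex.exp (t * (1 - (q : ℂ) ^ n) / (1 - (q : ℂ)))) Filter.atTop
      (nhds (Complex.exp (t / (1 - (q : ℂ))))) := by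
    have hcont : Continuous (fun w : ℂ => Complex.exp (t * (1 - w) / (1 - (q : ℂ)))) := by
      continuity
    have := (hcont.tendsto 0).comp hqn
    simpa [Function.comp_def] using this
  have hfinal : Filter.Tendsto
      (fun n : ℕ => Complex.exp (t * (1 - (q : ℂ) ^ n) / (1 - (q : ℂ))) * D ((q : ℂ) ^ n * t))
      Filter.atTop (nhds (Complex.exp (t / (1 - (q : ℂ))) * 0)) := hcontexp.mul hDlim
  have hconst : Filter.Tendsto
      (fun n : ℕ => Complex.exp (t * (1 - (q : ℂ) ^ n) / (1 - (q : ℂ))) * D ((q : ℂ) ^ n * t))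
      Filter.atTop (nhds (D t)) := by
    have heq : (fun n : ℕ => Complex.exp (t * (1 - (q : ℂ) ^ n) / (1 - (q : ℂ)))
        * D ((q : ℂ) ^ n * t)) = fun _ => D t := funext fun n => (hiter n).symm
    rw [heq]
    exact tendsto_const_nhds
  have := tendsto_nhds_unique hconst hfinal
  simpa using this
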